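/- arXiv:1311.7023 — 2 statements merged into one kernel-verified Lean document; each statement's English description precedes it below -/
import Mathlib

section
/- Let (Ω, ℙ) be a probability space, σ : Ω → Ω measure-preserving and ergodic, and A an event with p := ℙ(A) > 0. For ω ∈ Ω and n ≥ 1, let k₀ < k₁ < ⋯ < k_r enumerate the indices k ∈ [−n, n] ∩ ℤ with σ^k ω ∈ A (with σ^{-1} the inverse of σ, assumed invertible and measure-preserving), and set Δ_n(ω) = max_j (k_j − k_{j−1}) (Δ_n = ∞ if there are no such indices). Then ℙ-almost surely Δ_n/n → 0 as n → ∞. -/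
open MeasureTheory Filter Topology

namespace Stmt8Aux

variable {Ω : Type*}

/-- Real-valued count of visits to `C` among the first `n` iterates of `σ`. -/
noncomputable def cntR (σ : Ω → Ω) (C : Set Ω) (ω : Ω) (n : ℕ) : ℝ :=
  ∑ l ∈ Finset.range n, C.indicator (fun _ => (1:ℝ)) (σ^[l] ω)

lemma cntR_nonneg (σ : Ω → Ω) (C : Set Ω) (ω : Ω) (n : ℕ) : 0 ≤ cntR σ C ω n :=
  Finset.sum_nonneg fun _ _ => Set.indicator_nonneg (fun _ _ => zero_le_one) _

lemma cntR_le (σ : Ω → Ω) (C : Set Ω) (ω : Ω) (n : ℕ) : cntR σ C ω n ≤ n := by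
  have : cntR σ C ω n ≤ ∑ l ∈ Finset.range n, (1:ℝ) :=
    Finset.sum_le_sum fun _ _ => Set.indicator_le_self' (fun _ _ => zero_le_one) _
  simpa using this

lemma cntR_succ (σ : Ω → Ω) (C : Set Ω) (ω : Ω) (n : ℕ) :
    cntR σ C ω (n+1) = C.indicator (fun _ => (1:ℝ)) ω + cntR σ C (σ ω) n := by
  rw [cntR, Finset.sum_range_succ']
  simp only [Function.iterate_succ_apply, Function.iterate_zero_apply]
  rw [add_comm, cntR]

lemma cntR_mono (σ : Ω → Ω) (C : Set Ω) (ω : Ω) : Monotone (cntR σ C ω) := by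
  intro a b hab
  exact Finset.sum_le_sum_of_subset_of_nonneg (Finset.range_subset_range.2 hab)
    (fun _ _ _ => Set.indicator_nonneg (fun _ _ => zero_le_one) _)

lemma measurable_cntR [MeasurableSpace Ω] {σ : Ω → Ω} (hσ : Measurable σ) {C : Set Ω} (hC : MeasurableSet C)
    (n : ℕ) : Measurable fun ω => cntR σ C ω n := by
  apply Finset.measurable_sum
  intro l _
  exact (measurable_const.indicator hC).comp (hσ.iterate l)

lemma card_filter_eq_cntR (σ : Ω → Ω) (C : Set Ω) (ω : Ω) (n : ℕ) [DecidablePred (· ∈ C)] :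
    (((Finset.range n).filter fun l => σ^[l] ω ∈ C).card : ℝ) = cntR σ C ω n := by
  rw [Finset.card_filter]
  push_cast
  apply Finset.sum_congr rfl
  intro l _
  by_cases h : σ^[l] ω ∈ C <;> simp [h]

/-- running maximum of `S 0, …, S N`. -/
noncomputable def Mx (S : ℕ → ℝ) : ℕ → ℝ
  | 0 => S 0
  | (N+1) => max (Mx S N) (S (N+1))

lemma le_Mx (S : ℕ → ℝ) {n N : ℕ} (h : n ≤ N) : S n ≤ Mx S N := by
  induction N with
  | zero => simp_all [Mx]
  | succ N ih =>
    rcases Nat.lt_or_ge n (N+1) with h' | h'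
    · exact le_trans (ih (Nat.lt_succ_iff.1 h')) (le_max_left _ _)
    · have : n = N + 1 := le_antisymm h h'
      subst this; exact le_max_right _ _

lemma Mx_exists (S : ℕ → ℝ) (N : ℕ) : ∃ n ≤ N, Mx S N = S n := by
  induction N with
  | zero => exact ⟨0, le_refl _, rfl⟩
  | succ N ih =>
    rcases ih with ⟨n, hn, hMx⟩
    rcases le_total (Mx S N) (S (N+1)) with h | h
    · exact ⟨N+1, le_refl _, max_eq_right h⟩
    · exact ⟨n, hn.trans (Nat.le_succ _), (max_eq_left h).trans hMx⟩

lemma Mx_mono (S : ℕ → ℝ) : Monotone (Mx S) := by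
  apply monotone_nat_of_le_succ
  intro n; exact le_max_left _ _

lemma measurable_Mx [MeasurableSpace Ω] {S : Ω → ℕ → ℝ} (hS : ∀ n, Measurable fun ω => S ω n) (N : ℕ) :
    Measurable fun ω => Mx (S ω) N := by
  induction N with
  | zero => exact hS 0
  | succ N ih => exact Measurable.max ih (hS (N+1))


lemma maximal [MeasurableSpace Ω] {μ : Measure Ω} [IsProbabilityMeasure μ] {σ : Ω → Ω} (hσ : MeasurePreserving σ μ μ)
    {C : Set Ω} (hC : MeasurableSet C) {β : ℝ} (hβ : 0 < β) :
    μ {ω | ∃ n : ℕ, β * n < cntR σ C ω n} ≤ ENNReal.ofReal ((μ C).toReal / β) := by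
  set S : Ω → ℕ → ℝ := fun ω n => cntR σ C ω n - β * n with hS
  have hSmeas : ∀ n, Measurable fun ω => S ω n := fun n =>
    (measurable_cntR hσ.measurable hC n).sub measurable_const
  set g : ℕ → Ω → ℝ := fun N ω => Mx (S ω) N with hg
  have hgmeas : ∀ N, Measurable (g N) := fun N => measurable_Mx hSmeas N
  have hS0 : ∀ ω, S ω 0 = 0 := by intro ω; simp [hS, cntR]
  have hg0 : ∀ N ω, 0 ≤ g N ω := fun N ω => (hS0 ω) ▸ le_Mx (S ω) (Nat.zero_le N)
  have hgN : ∀ N ω, g N ω ≤ N := by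
    intro N ω
    obtain ⟨n, hn, hMx⟩ := Mx_exists (S ω) N
    have hgval : g N ω = S ω n := hMx
    rw [hgval]
    have h1 := cntR_le σ C ω n
    have h2 : (0:ℝ) ≤ β * n := by positivity
    have h3 : (n:ℝ) ≤ N := Nat.cast_le.2 hn
    simp only [hS]; linarith
  set E : ℕ → Set Ω := fun N => {ω | 0 < g N ω} with hE
  have hEmeas : ∀ N, MeasurableSet (E N) := fun N => measurableSet_lt measurable_const (hgmeas N)
  set f : Ω → ℝ := fun ω => C.indicator (fun _ => (1:ℝ)) ω - β with hf
  have hfmeas : Measurable f := (measurable_const.indicator hC).sub measurable_const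
  have hfbdd : ∀ ω, |f ω| ≤ 1 + β := by
    intro ω
    have hfeq : f ω = C.indicator (fun _ => (1:ℝ)) ω - β := rfl
    by_cases h : ω ∈ C
    · rw [hfeq, Set.indicator_of_mem h, abs_le]; constructor <;> linarith
    · rw [hfeq, Set.indicator_of_notMem h, abs_le]; constructor <;> linarith
  have hbound : ∀ N, μ (E N) ≤ ENNReal.ofReal ((μ C).toReal / β) := by
    intro N
    have key : ∀ ω, g N ω ≤ (E N).indicator f ω + g N (σ ω) := by
      intro ω
      by_cases hω : ω ∈ E N
      · rw [Set.indicator_of_mem hω]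
        obtain ⟨n, hn, hMx⟩ := Mx_exists (S ω) N
        match n, hn, hMx with
        | 0, hn, hMx =>
          exfalso
          have hlt : (0:ℝ) < g N ω := hω
          have hgval : g N ω = S ω 0 := hMx
          rw [hgval, hS0] at hlt
          exact lt_irrefl _ hlt
        | (m+1), hn, hMx =>
          have hrec : S ω (m+1) = f ω + S (σ ω) m := by
            simp only [hS, hf, cntR_succ]
            push_cast; ring
          have hle : S (σ ω) m ≤ g N (σ ω) := le_Mx _ (le_trans (Nat.le_succ m) hn)
          have hgval : g N ω = S ω (m+1) := hMx
          rw [hgval, hrec]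
          linarith
      · rw [Set.indicator_of_notMem hω]
        have h1 : g N ω ≤ 0 := not_lt.1 hω
        have h2 := hg0 N (σ ω)
        linarith
    have hgint : Integrable (g N) μ := by
      apply Integrable.mono' (integrable_const (N:ℝ)) (hgmeas N).aestronglyMeasurable
      filter_upwards with ω
      rw [Real.norm_eq_abs, abs_of_nonneg (hg0 N ω)]; exact hgN N ω
    have hgσint : Integrable (fun ω => g N (σ ω)) μ := by
      apply Integrable.mono' (integrable_const (N:ℝ))
        ((hgmeas N).comp hσ.measurable).aestronglyMeasurable
      filter_upwards with ω
      rw [Function.comp_apply, Real.norm_eq_abs, abs_of_nonneg (hg0 N (σ ω))]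
      exact hgN N (σ ω)
    have hfind : Integrable ((E N).indicator f) μ := by
      apply Integrable.mono' (integrable_const (1+β))
        (hfmeas.indicator (hEmeas N)).aestronglyMeasurable
      filter_upwards with ω
      rw [Real.norm_eq_abs]
      calc |(E N).indicator f ω| ≤ |f ω| := by
            by_cases h : ω ∈ E N
            · rw [Set.indicator_of_mem h]
            · rw [Set.indicator_of_notMem h]; simpa using abs_nonneg (f ω)
        _ ≤ 1 + β := hfbdd ω
    have hcomp : ∫ ω, g N (σ ω) ∂μ = ∫ ω, g N ω ∂μ := by
      have hmap : Measure.map σ μ = μ := hσ.map_eq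
      have h1 : ∫ ω, g N ω ∂(Measure.map σ μ) = ∫ ω, g N (σ ω) ∂μ :=
        integral_map hσ.measurable.aemeasurable
          (by rw [hmap]; exact (hgmeas N).aestronglyMeasurable)
      rw [hmap] at h1; exact h1.symm
    have hint : ∫ ω, g N ω ∂μ ≤ ∫ ω, ((E N).indicator f ω + g N (σ ω)) ∂μ :=
      integral_mono hgint (hfind.add hgσint) key
    rw [integral_add hfind hgσint, hcomp] at hint
    have hpos : 0 ≤ ∫ ω, (E N).indicator f ω ∂μ := by linarith
    have hval : ∫ ω, (E N).indicator f ω ∂μ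
        = (μ (E N ∩ C)).toReal - (μ (E N)).toReal * β := by
      rw [integral_indicator (hEmeas N)]
      have hsub : ∫ ω in E N, f ω ∂μ
          = (∫ ω in E N, C.indicator (fun _ => (1:ℝ)) ω ∂μ) - ∫ ω in E N, β ∂μ := by
        apply integral_sub
        · apply Integrable.mono' (integrable_const (1:ℝ))
            (measurable_const.indicator hC).aestronglyMeasurable.restrict
          filter_upwards with ω
          rw [Real.norm_eq_abs]
          by_cases h : ω ∈ C
          · rw [Set.indicator_of_mem h]; simp
          · rw [Set.indicator_of_notMem h]; simp
        · exact integrable_const β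
      rw [hsub, setIntegral_indicator hC, setIntegral_const, setIntegral_const]
      simp [mul_comm]
      rfl
    rw [hval] at hpos
    have hEC : (μ (E N ∩ C)).toReal ≤ (μ C).toReal :=
      ENNReal.toReal_mono (measure_ne_top μ C) (measure_mono Set.inter_subset_right)
    have hx : (μ (E N)).toReal ≤ (μ C).toReal / β := by
      rw [le_div_iff₀ hβ]; linarith
    rw [← ENNReal.ofReal_toReal (measure_ne_top μ (E N))]
    exact ENNReal.ofReal_le_ofReal hx
  have hsub : {ω | ∃ n : ℕ, β * n < cntR σ C ω n} ⊆ ⋃ N, E N := by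
    intro ω hω
    obtain ⟨n, hn⟩ := hω
    refine Set.mem_iUnion.2 ⟨n, ?_⟩
    have : 0 < S ω n := by simp only [hS]; linarith
    exact lt_of_lt_of_le this (le_Mx (S ω) (le_refl n))
  have hmono : Monotone E := by
    intro a b hab ω hω
    exact lt_of_lt_of_le hω (Mx_mono (S ω) hab)
  calc μ {ω | ∃ n : ℕ, β * n < cntR σ C ω n} ≤ μ (⋃ N, E N) := measure_mono hsub
    _ = ⨆ N, μ (E N) := (hmono.directed_le).measure_iUnion
    _ ≤ ENNReal.ofReal ((μ C).toReal / β) := iSup_le hbound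


/-- the "frequently above slope q" set -/
def Gset (σ : Ω → Ω) (C : Set Ω) (q : ℚ) : Set Ω :=
  {ω | ∀ N : ℕ, ∃ n, N ≤ n ∧ (q:ℝ) * n < cntR σ C ω n}

lemma cntR_sandwich (σ : Ω → Ω) (C : Set Ω) (ω : Ω) (n : ℕ) :
    cntR σ C (σ ω) n ≤ cntR σ C ω (n+1) ∧ cntR σ C ω (n+1) ≤ cntR σ C (σ ω) n + 1 := by
  rw [cntR_succ]
  have h0 : (0:ℝ) ≤ C.indicator (fun _ => (1:ℝ)) ω := Set.indicator_nonneg (fun _ _ => zero_le_one) _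
  have h1 : C.indicator (fun _ => (1:ℝ)) ω ≤ 1 := Set.indicator_le_self' (fun _ _ => zero_le_one) _
  constructor <;> linarith

lemma Gset_A {σ : Ω → Ω} {C : Set Ω} {γ β : ℚ} (hγ : 0 < γ) (hγβ : γ < β) {ω : Ω}
    (h : σ ω ∈ Gset σ C β) : ω ∈ Gset σ C γ := by
  intro N
  obtain ⟨M, hM⟩ := exists_nat_ge ((γ:ℝ) / (β - γ))
  obtain ⟨n, hnN, hn⟩ := h (max N M)
  refine ⟨n + 1, by omega, ?_⟩
  have h1 := (cntR_sandwich σ C ω n).1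
  have hβγ : (0:ℝ) < (β:ℝ) - γ := by push_cast; exact_mod_cast sub_pos.2 (by exact_mod_cast hγβ)
  have hnM : (M:ℝ) ≤ n := Nat.cast_le.2 (le_trans (le_max_right N M) hnN)
  have hkey : (γ:ℝ) * (n + 1) ≤ (β:ℝ) * n := by
    have : (γ:ℝ) ≤ ((n:ℝ)) * ((β:ℝ) - γ) := by
      calc (γ:ℝ) = ((γ:ℝ) / ((β:ℝ) - γ)) * ((β:ℝ) - γ) := by field_simp
        _ ≤ (M:ℝ) * ((β:ℝ) - γ) := by apply mul_le_mul_of_nonneg_right hM hβγ.le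
        _ ≤ (n:ℝ) * ((β:ℝ) - γ) := by apply mul_le_mul_of_nonneg_right hnM hβγ.le
    nlinarith
  push_cast
  push_cast at hkey hn h1
  linarith

lemma Gset_B {σ : Ω → Ω} {C : Set Ω} {β β' : ℚ} (hβ : 0 < β) (hββ' : β < β') {ω : Ω}
    (h : ω ∈ Gset σ C β') : σ ω ∈ Gset σ C β := by
  intro N
  obtain ⟨M, hM⟩ := exists_nat_ge ((1:ℝ) / ((β':ℝ) - β))
  obtain ⟨n, hnN, hn⟩ := h (max (N+1) (M+1))
  obtain ⟨m, rfl⟩ : ∃ m, n = m + 1 := ⟨n - 1, by omega⟩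
  refine ⟨m, by omega, ?_⟩
  have h2 := (cntR_sandwich σ C ω m).2
  have hββ : (0:ℝ) < (β':ℝ) - β := by exact_mod_cast sub_pos.2 (by exact_mod_cast hββ')
  have hmM : (M:ℝ) ≤ m := Nat.cast_le.2 (by omega)
  have hβ'pos : (0:ℝ) < (β':ℝ) := by exact_mod_cast lt_trans hβ hββ'
  have hkey : (β:ℝ) * m + 1 ≤ (β':ℝ) * (m + 1) := by
    have : (1:ℝ) ≤ ((m:ℝ)) * ((β':ℝ) - β) := by
      calc (1:ℝ) = ((1:ℝ) / ((β':ℝ) - β)) * ((β':ℝ) - β) := by field_simp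
        _ ≤ (M:ℝ) * ((β':ℝ) - β) := by apply mul_le_mul_of_nonneg_right hM hββ.le
        _ ≤ (m:ℝ) * ((β':ℝ) - β) := by apply mul_le_mul_of_nonneg_right hmM hββ.le
    nlinarith [hβ'pos]
  push_cast
  push_cast at hkey hn h2
  linarith

lemma measurable_Gset [MeasurableSpace Ω] {σ : Ω → Ω} (hσ : Measurable σ) {C : Set Ω}
    (hC : MeasurableSet C) (q : ℚ) : MeasurableSet (Gset σ C q) := by
  have : Gset σ C q = ⋂ N : ℕ, ⋃ n : ℕ, ⋃ (_ : N ≤ n),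
      {ω | (q:ℝ) * n < cntR σ C ω n} := by
    ext ω; simp [Gset]
  rw [this]
  refine MeasurableSet.iInter fun N => MeasurableSet.iUnion fun n => MeasurableSet.iUnion fun _ => ?_
  exact measurableSet_lt measurable_const (measurable_cntR hσ hC n)

lemma density [MeasurableSpace Ω] {μ : Measure Ω} [IsProbabilityMeasure μ] {σ : Ω → Ω}
    (hE : Ergodic σ μ) {C : Set Ω} (hC : MeasurableSet C) {α : ℝ} (hα : 0 < α)
    (hμC : μ C < ENNReal.ofReal α) :
    ∀ᵐ ω ∂μ, ∀ᶠ n : ℕ in atTop, cntR σ C ω n ≤ 2 * α * n := by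
  have hσ : MeasurePreserving σ μ μ := hE.toMeasurePreserving
  set H : Set Ω := ⋂ (q : ℚ), ⋂ (_ : α < (q:ℝ) ∧ (q:ℝ) < 2 * α), Gset σ C q with hH
  have hHmeas : MeasurableSet H :=
    MeasurableSet.iInter fun q => MeasurableSet.iInter fun _ => measurable_Gset hσ.measurable hC q
  have hHinv : σ ⁻¹' H = H := by
    apply Set.Subset.antisymm
    · intro ω hω
      simp only [hH, Set.mem_preimage, Set.mem_iInter] at hω ⊢
      intro q hq
      obtain ⟨q', hq1', hq2'⟩ := exists_rat_btwn (show (q:ℝ) < 2*α from hq.2)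
      have hσω : σ ω ∈ Gset σ C q' := hω q' ⟨lt_trans hq.1 hq1', hq2'⟩
      have hqpos : (0:ℚ) < q := by
        have h0 : (0:ℝ) < (q:ℝ) := lt_trans hα hq.1
        exact_mod_cast h0
      exact Gset_A hqpos (by exact_mod_cast hq1') hσω
    · intro ω hω
      simp only [hH, Set.mem_preimage, Set.mem_iInter] at hω ⊢
      intro q hq
      obtain ⟨q', hq1', hq2'⟩ := exists_rat_btwn (show (q:ℝ) < 2*α from hq.2)
      have hω' : ω ∈ Gset σ C q' := hω q' ⟨lt_trans hq.1 hq1', hq2'⟩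
      have hqpos : (0:ℚ) < q := by
        have h0 : (0:ℝ) < (q:ℝ) := lt_trans hα hq.1
        exact_mod_cast h0
      exact Gset_B hqpos (by exact_mod_cast hq1') hω'
  -- H has measure zero
  obtain ⟨q₀, hq₀1, hq₀2⟩ := exists_rat_btwn (show α < 2*α by linarith)
  have hq₀pos : (0:ℝ) < (q₀:ℝ) := lt_trans hα hq₀1
  have hHsub : H ⊆ {ω | ∃ n : ℕ, (q₀:ℝ) * n < cntR σ C ω n} := by
    intro ω hω
    simp only [hH, Set.mem_iInter] at hω
    obtain ⟨n, _, hn⟩ := hω q₀ ⟨hq₀1, hq₀2⟩ 0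
    exact ⟨n, hn⟩
  have hμCq : (μ C).toReal < (q₀:ℝ) := by
    have h1 : (μ C).toReal < α := by
      have := ENNReal.toReal_lt_of_lt_ofReal hμC
      exact this
    linarith
  have hHlt : μ H < 1 := by
    calc μ H ≤ μ {ω | ∃ n : ℕ, (q₀:ℝ) * n < cntR σ C ω n} := measure_mono hHsub
      _ ≤ ENNReal.ofReal ((μ C).toReal / (q₀:ℝ)) := maximal hσ hC hq₀pos
      _ < 1 := by
          rw [← ENNReal.ofReal_one]
          apply ENNReal.ofReal_lt_ofReal_iff_of_nonneg (by positivity) |>.2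
          rw [div_lt_one hq₀pos]
          exact hμCq
  have hH0 : μ H = 0 := by
    rcases hE.ae_empty_or_univ hHmeas hHinv with h | h
    · exact (measure_congr h).trans measure_empty
    · exfalso
      have : μ H = 1 := (measure_congr h).trans measure_univ
      rw [this] at hHlt; exact lt_irrefl _ hHlt
  have hae : ∀ᵐ ω ∂μ, ω ∉ H := by
    rw [ae_iff]; simpa using hH0
  filter_upwards [hae] with ω hω
  simp only [hH, Set.mem_iInter, not_forall] at hω
  obtain ⟨q, hq, hnotG⟩ := hω
  simp only [Gset, Set.mem_setOf_eq, not_forall] at hnotG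
  obtain ⟨N, hN⟩ := hnotG
  push_neg at hN
  rw [eventually_atTop]
  refine ⟨N, fun n hn => ?_⟩
  have h1 := hN n hn
  have h2 : (q:ℝ) * n ≤ 2 * α * n := by
    apply mul_le_mul_of_nonneg_right (le_of_lt hq.2) (Nat.cast_nonneg n)
  linarith


lemma coe_zpow_nat (T : Equiv.Perm Ω) (l : ℕ) :
    ⇑(T ^ (l:ℤ)) = (⇑T)^[l] := by
  rw [zpow_natCast, Equiv.Perm.iterate_eq_pow]

lemma coe_zpow_neg_nat (T : Equiv.Perm Ω) (l : ℕ) :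
    ⇑(T ^ (-(l:ℤ))) = (⇑T.symm)^[l] := by
  rw [zpow_neg, zpow_natCast, ← inv_pow, Equiv.Perm.iterate_eq_pow]
  rfl

lemma measurePreserving_zpow [MeasurableSpace Ω] {μ : Measure Ω} {T : Equiv.Perm Ω}
    (hT : MeasurePreserving T μ μ) (hTinv : MeasurePreserving T.symm μ μ) (k : ℤ) :
    MeasurePreserving (⇑(T ^ k)) μ μ := by
  match k with
  | Int.ofNat n =>
    have : (Int.ofNat n) = (n:ℤ) := rfl
    rw [this, coe_zpow_nat]
    exact hT.iterate n
  | Int.negSucc n =>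
    have : (Int.negSucc n) = -((n+1:ℕ):ℤ) := by rw [Int.negSucc_eq]; push_cast; ring
    rw [this, coe_zpow_neg_nat]
    exact hTinv.iterate (n+1)

end Stmt8Aux

open Stmt8Aux in
/-- Gap-density lemma: if `T` is an invertible ergodic measure-preserving map of a
probability space and `A` has positive measure, then a.s. the maximal gap `Δ_n`
between consecutive visit indices `k ∈ [-n,n]` (with `T^k ω ∈ A`) is `o(n)`:
for every `δ > 0`, eventually in `n` there is at least one visit index in `[-n,n]`
and consecutive visit indices `j < k` in `[-n,n]` satisfy `k - j ≤ δ n`. -/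
theorem stmt8
    {Ω : Type*} [MeasurableSpace Ω] (μ : Measure Ω) [IsProbabilityMeasure μ]
    (T : Equiv.Perm Ω)
    (hT : MeasurePreserving T μ μ) (hTinv : MeasurePreserving T.symm μ μ)
    (hErg : Ergodic (T : Ω → Ω) μ)
    (A : Set Ω) (hAmeas : MeasurableSet A) (hA : 0 < μ A) :
    ∀ᵐ ω ∂μ, ∀ δ > (0:ℝ), ∀ᶠ n : ℕ in atTop,
      (∃ k : ℤ, |k| ≤ (n:ℤ) ∧ ((T ^ k : Equiv.Perm Ω)) ω ∈ A) ∧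
      ∀ j k : ℤ, |j| ≤ (n:ℤ) → ((T ^ j : Equiv.Perm Ω)) ω ∈ A →
        |k| ≤ (n:ℤ) → ((T ^ k : Equiv.Perm Ω)) ω ∈ A → j < k →
        (∀ l : ℤ, j < l → l < k → ((T ^ l : Equiv.Perm Ω)) ω ∉ A) →
        ((k - j : ℤ) : ℝ) ≤ δ * n := by
  classical
  have hmpz : ∀ k : ℤ, MeasurePreserving (⇑(T ^ k)) μ μ := measurePreserving_zpow hT hTinv
  -- the inverse map is ergodic
  have hErgInv : Ergodic (⇑T.symm) μ := by
    refine ⟨hTinv, ⟨fun s hs hinv => hErg.aeconst_set hs ?_⟩⟩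
    have h1 : ⇑T ⁻¹' (⇑T.symm ⁻¹' s) = ⇑T ⁻¹' s := congrArg _ hinv
    have h2 : ⇑T ⁻¹' (⇑T.symm ⁻¹' s) = s := by
      ext x; simp
    exact h1.symm.trans h2
  -- the set of points that ever visit A has full measure
  set S : Set Ω := ⋃ k : ℤ, ⇑(T ^ k) ⁻¹' A with hSdef
  have hSmeas : MeasurableSet S :=
    MeasurableSet.iUnion fun k => (hmpz k).measurable hAmeas
  have hSinv : ⇑T ⁻¹' S = S := by
    have hstep : ∀ k : ℤ, ⇑T ⁻¹' (⇑(T ^ k) ⁻¹' A) = ⇑(T ^ (k+1)) ⁻¹' A := by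
      intro k
      rw [← Set.preimage_comp, ← Equiv.Perm.coe_mul, ← zpow_add_one]
    rw [hSdef, Set.preimage_iUnion]
    simp_rw [hstep]
    ext x
    simp only [Set.mem_iUnion]
    constructor
    · rintro ⟨k, h⟩; exact ⟨k + 1, h⟩
    · rintro ⟨k, h⟩; exact ⟨k - 1, by simpa using h⟩
  have hS1 : μ S = 1 := by
    rcases hErg.toPreErgodic.ae_empty_or_univ hSmeas hSinv with h | h
    · exfalso
      have h0 : μ S = 0 := by rw [measure_congr h]; simp
      have hAS : A ⊆ S := by
        intro x hx
        refine Set.mem_iUnion.2 ⟨0, ?_⟩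
        simpa using hx
      have : μ A ≤ μ S := measure_mono hAS
      rw [h0] at this
      exact absurd (le_antisymm this zero_le) (ne_of_gt hA)
    · rw [measure_congr h]; simp
  have hae_S : ∀ᵐ ω ∂μ, ∃ k : ℤ, ⇑(T ^ k) ω ∈ A := by
    have hc : μ Sᶜ = 0 := by
      rw [measure_compl hSmeas (measure_ne_top μ S), hS1, measure_univ, tsub_self]
    rw [ae_iff]
    convert hc using 2
    ext ω
    simp [hSdef]
  -- window sets
  set Cs : ℕ → Set Ω := fun m => {ω | ∀ k : ℤ, |k| ≤ (m:ℤ) → ⇑(T ^ k) ω ∉ A} with hCdef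
  have hCmeas : ∀ m, MeasurableSet (Cs m) := by
    intro m
    have : Cs m = ⋂ k : ℤ, ⋂ (_ : |k| ≤ (m:ℤ)), (⇑(T ^ k) ⁻¹' A)ᶜ := by
      ext ω; simp [hCdef]
    rw [this]
    exact MeasurableSet.iInter fun k => MeasurableSet.iInter fun _ =>
      ((hmpz k).measurable hAmeas).compl
  have hCanti : Antitone Cs := by
    intro a b hab ω hω k hk
    exact hω k (le_trans hk (by exact_mod_cast hab))
  have hCinter : (⋂ m, Cs m) ⊆ Sᶜ := by
    intro ω hω
    simp only [Set.mem_iInter] at hω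
    intro hωS
    obtain ⟨k, hk⟩ := Set.mem_iUnion.1 hωS
    exact hω k.natAbs k (le_of_eq (Int.abs_eq_natAbs k)) hk
  have hCtend : Tendsto (fun m => μ (Cs m)) atTop (𝓝 0) := by
    have h0 : μ (⋂ m, Cs m) = 0 := by
      apply le_antisymm _ zero_le
      calc μ (⋂ m, Cs m) ≤ μ Sᶜ := measure_mono hCinter
        _ = 0 := by
          rw [measure_compl hSmeas (measure_ne_top μ S), hS1, measure_univ, tsub_self]
    have := tendsto_measure_iInter_atTop
      (fun m => (hCmeas m).nullMeasurableSet) hCanti ⟨0, measure_ne_top μ _⟩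
    rw [h0] at this
    exact this
  -- key statement for each i
  have key : ∀ i : ℕ, ∀ᵐ ω ∂μ, ∀ᶠ n : ℕ in atTop,
      (∃ k : ℤ, |k| ≤ (n:ℤ) ∧ ((T ^ k : Equiv.Perm Ω)) ω ∈ A) ∧
      ∀ j k : ℤ, |j| ≤ (n:ℤ) → ((T ^ j : Equiv.Perm Ω)) ω ∈ A →
        |k| ≤ (n:ℤ) → ((T ^ k : Equiv.Perm Ω)) ω ∈ A → j < k →
        (∀ l : ℤ, j < l → l < k → ((T ^ l : Equiv.Perm Ω)) ω ∉ A) →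
        ((k - j : ℤ) : ℝ) ≤ (1/((i:ℝ)+1)) * n := by
    intro i
    set δ : ℝ := 1/((i:ℝ)+1) with hδdef
    have hδpos : 0 < δ := by positivity
    have hδle1 : δ ≤ 1 := by
      rw [hδdef, div_le_one (by positivity)]
      have : (0:ℝ) ≤ i := Nat.cast_nonneg i
      linarith
    have hαpos : 0 < δ/20 := by positivity
    -- choose m with small bad-window measure
    have hev : ∀ᶠ m : ℕ in atTop, μ (Cs m) < ENNReal.ofReal (δ/20) :=
      hCtend.eventually_lt_const (by simp [ENNReal.ofReal_pos, hαpos])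
    obtain ⟨m, hm⟩ := hev.exists
    have densF := density hErg (hCmeas m) hαpos hm
    have densB := density hErgInv (hCmeas m) hαpos hm
    filter_upwards [densF, densB, hae_S] with ω hF hB hex
    obtain ⟨k₀, hk₀⟩ := hex
    rw [eventually_atTop] at hF hB
    obtain ⟨N₁, hN₁⟩ := hF
    obtain ⟨N₂, hN₂⟩ := hB
    obtain ⟨N₃, hN₃⟩ := exists_nat_ge ((20*(m:ℝ)+40)/δ)
    rw [eventually_atTop]
    refine ⟨max (max N₁ N₂) (max N₃ k₀.natAbs), fun n hn => ?_⟩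
    have hnN₁ : N₁ ≤ n := le_trans (le_trans (le_max_left _ _) (le_max_left _ _)) hn
    have hnN₂ : N₂ ≤ n := le_trans (le_trans (le_max_right _ _) (le_max_left _ _)) hn
    have hnN₃ : N₃ ≤ n := le_trans (le_trans (le_max_left _ _) (le_max_right _ _)) hn
    have hnk₀ : k₀.natAbs ≤ n := le_trans (le_trans (le_max_right _ _) (le_max_right _ _)) hn
    have hnR : (20*(m:ℝ)+40)/δ ≤ n := le_trans hN₃ (Nat.cast_le.2 hnN₃)
    have h20 : 20*(m:ℝ)+40 ≤ δ * n := by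
      rw [div_le_iff₀ hδpos] at hnR
      linarith
    constructor
    · refine ⟨k₀, ?_, hk₀⟩
      rw [Int.abs_eq_natAbs]
      exact_mod_cast hnk₀
    · intro j k hj hjA hk hkA hjk hgap
      by_contra hcon
      push_neg at hcon
      rw [abs_le] at hj hk
      set V : Finset ℤ := (Finset.Icc (-(n:ℤ)) (n:ℤ)).filter
        (fun l => ⇑(T ^ l) ω ∈ Cs m) with hVdef
      -- k - j is large
      have hkjR : (20*(m:ℝ)+40) < ((k - j : ℤ):ℝ) := lt_of_le_of_lt h20 hcon
      have hkj : (2*(m:ℤ)+1) < k - j := by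
        have : ((2*(m:ℤ)+1 : ℤ):ℝ) < ((k - j : ℤ):ℝ) := by
          push_cast
          push_cast at hkjR
          linarith [Nat.cast_nonneg (α := ℝ) m]
        exact_mod_cast this
      -- lower bound on V.card
      have hIccV : Finset.Icc (j+m+1) (k-m-1) ⊆ V := by
        intro l hl
        rw [Finset.mem_Icc] at hl
        rw [hVdef, Finset.mem_filter, Finset.mem_Icc]
        refine ⟨⟨by omega, by omega⟩, ?_⟩
        intro i' hi'
        rw [abs_le] at hi'
        have hmul : ⇑(T ^ i') (⇑(T ^ l) ω) = ⇑(T ^ (i' + l)) ω := by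
          rw [← Equiv.Perm.mul_apply, ← zpow_add]
        rw [hmul]
        exact hgap (i' + l) (by omega) (by omega)
      have hcard_Icc : (Finset.Icc (j+m+1) (k-m-1)).card = (k - j - 2*m - 1).toNat := by
        rw [Int.card_Icc]
        congr 1
        ring
      have hlow : ((k - j : ℤ):ℝ) - (2*(m:ℝ)+1) ≤ (V.card : ℝ) := by
        have h1 : (k - j - 2*m - 1).toNat ≤ V.card := by
          rw [← hcard_Icc]
          exact Finset.card_le_card hIccV
        have h2 : (((k - j - 2*m - 1).toNat : ℤ):ℝ) ≤ (V.card : ℝ) := by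
          exact_mod_cast h1
        have h3 : ((k - j - 2*m - 1).toNat : ℤ) = k - j - 2*m - 1 :=
          Int.toNat_of_nonneg (by omega)
        rw [h3] at h2
        push_cast at h2 ⊢
        linarith
      -- upper bound on V.card
      have hupF : ((V.filter (fun l => 0 ≤ l)).card : ℝ) ≤ cntR ⇑T (Cs m) ω (n+1) := by
        rw [← card_filter_eq_cntR]
        apply Nat.cast_le.2
        apply Finset.card_le_card_of_injOn (fun l => l.toNat)
        · intro l hl
          simp only [hVdef, Finset.mem_coe, Finset.mem_filter, Finset.mem_Icc] at hl
          obtain ⟨⟨⟨hl1, hl2⟩, hlC⟩, hl0⟩ := hl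
          rw [Finset.mem_coe, Finset.mem_filter, Finset.mem_range]
          constructor
          · show l.toNat < n + 1
            omega
          · show (⇑T)^[l.toNat] ω ∈ Cs m
            have hcast : ((l.toNat:ℕ):ℤ) = l := Int.toNat_of_nonneg hl0
            rw [← coe_zpow_nat, hcast]
            exact hlC
        · intro a ha b hb hab
          simp only [hVdef, Finset.mem_coe, Finset.mem_filter, Finset.mem_Icc] at ha hb
          replace hab : a.toNat = b.toNat := hab
          omega
      have hupB : ((V.filter (fun l => ¬ 0 ≤ l)).card : ℝ) ≤ cntR ⇑T.symm (Cs m) ω (n+1) := by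
        rw [← card_filter_eq_cntR]
        apply Nat.cast_le.2
        apply Finset.card_le_card_of_injOn (fun l => (-l).toNat)
        · intro l hl
          simp only [hVdef, Finset.mem_coe, Finset.mem_filter, Finset.mem_Icc] at hl
          obtain ⟨⟨⟨hl1, hl2⟩, hlC⟩, hl0⟩ := hl
          rw [Finset.mem_coe, Finset.mem_filter, Finset.mem_range]
          constructor
          · show (-l).toNat < n + 1
            omega
          · show (⇑T.symm)^[(-l).toNat] ω ∈ Cs m
            have hcast : (((-l).toNat:ℕ):ℤ) = -l := Int.toNat_of_nonneg (by omega)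
            rw [← coe_zpow_neg_nat, hcast, neg_neg]
            exact hlC
        · intro a ha b hb hab
          simp only [hVdef, Finset.mem_coe, Finset.mem_filter, Finset.mem_Icc] at ha hb
          replace hab : (-a).toNat = (-b).toNat := hab
          omega
      have hsplit : (V.filter (fun l => 0 ≤ l)).card
          + (V.filter (fun l => ¬ 0 ≤ l)).card = V.card :=
        Finset.card_filter_add_card_filter_not _
      have hn₁ := hN₁ (n+1) (by omega)
      have hn₂ := hN₂ (n+1) (by omega)
      have hup : (V.card : ℝ) ≤ 2*(δ/20)*(n+1) + 2*(δ/20)*(n+1) := by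
        rw [← hsplit]
        push_cast
        push_cast at hn₁ hn₂
        linarith [hupF, hupB]
      exfalso
      push_cast at hup hlow hcon
      linarith
  -- combine over i
  filter_upwards [ae_all_iff.2 key] with ω hω δ hδ
  obtain ⟨i, hi⟩ := exists_nat_gt (1/δ)
  have hδi : 1/((i:ℝ)+1) ≤ δ := by
    rw [div_le_iff₀ (by positivity)]
    rw [div_lt_iff₀ hδ] at hi
    nlinarith
  filter_upwards [hω i] with n hn
  refine ⟨hn.1, fun j k hj hjA hk hkA hjk hgap => ?_⟩
  calc ((k - j : ℤ):ℝ) ≤ (1/((i:ℝ)+1)) * n := hn.2 j k hj hjA hk hkA hjk hgap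
    _ ≤ δ * n := mul_le_mul_of_nonneg_right hδi (Nat.cast_nonneg n)
end

section
/- Suppose a_n ∈ ℝ, p > 0, δ > 0 and N ∈ ℕ are such that for all n > N, (1/(n+1))·Σ_{k=0}^{n} a_k ∈ (p(1−δ/16), p(1+δ/16)), where each a_k ∈ {0,1}. Then there is no interval [L₁, L₂] ⊆ (N, ∞) of length greater than Kδ/4 with L₂ ≤ K, (Kδ−2N−1)/2 > Kδ/4, containing no index k with a_k = 1. -/
/-- Combinatorial core of the gap-density lemma: if the running averages of a 0–1
sequence stay in the window `(p(1-δ/16), p(1+δ/16))` beyond index `N`, then there is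
no all-zero interval `[L₁, L₂] ⊆ (N, ∞)` of length greater than `Kδ/4` with `L₂ ≤ K`
and `(Kδ - 2N - 1)/2 > Kδ/4`. -/
theorem stmt9
    (a : ℕ → ℝ) (ha : ∀ k, a k = 0 ∨ a k = 1)
    (p δ : ℝ) (hp : 0 < p) (hδ : 0 < δ) (N K : ℕ)
    (havg : ∀ n : ℕ, N < n →
      (1 / ((n:ℝ) + 1)) * ∑ k ∈ Finset.range (n + 1), a k
        ∈ Set.Ioo (p * (1 - δ/16)) (p * (1 + δ/16))) :
    ¬ ∃ L₁ L₂ : ℕ, N < L₁ ∧ L₁ ≤ L₂ ∧ L₂ ≤ K ∧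
        (K:ℝ) * δ / 4 < (L₂:ℝ) - (L₁:ℝ) ∧
        (K:ℝ) * δ / 4 < ((K:ℝ) * δ - 2 * (N:ℝ) - 1) / 2 ∧
        (∀ k : ℕ, L₁ ≤ k → k ≤ L₂ → a k = 0) := by
  rintro ⟨L₁, L₂, h1, h2, h3, h4, h5, h6⟩
  have hsum : ∑ k ∈ Finset.range (L₁ + 1), a k = ∑ k ∈ Finset.range (L₂ + 1), a k := by
    apply Finset.sum_subset
    · exact Finset.range_subset_range.2 (by omega)
    · intro k hk hk'
      simp only [Finset.mem_range] at hk hk'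
      exact h6 k (by omega) (by omega)
  have A := havg L₁ h1
  have B := havg L₂ (lt_of_lt_of_le h1 h2)
  rw [← hsum] at B
  have hL1pos : (0:ℝ) < (L₁:ℝ) + 1 := by positivity
  have hL2pos : (0:ℝ) < (L₂:ℝ) + 1 := by positivity
  set S := ∑ k ∈ Finset.range (L₁ + 1), a k with hS
  have hA : S < p * (1 + δ/16) * ((L₁:ℝ) + 1) := by
    have h := A.2
    rw [one_div, inv_mul_eq_div, div_lt_iff₀ hL1pos] at h
    exact h
  have hB : p * (1 - δ/16) * ((L₂:ℝ) + 1) < S := by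
    have h := B.1
    rw [one_div, inv_mul_eq_div, lt_div_iff₀ hL2pos] at h
    exact h
  have hx1 : (1:ℝ) ≤ (L₁:ℝ) := by exact_mod_cast Nat.one_le_iff_ne_zero.2 (by omega)
  have hxy : (L₁:ℝ) ≤ (L₂:ℝ) := by exact_mod_cast h2
  have hyK : (L₂:ℝ) ≤ (K:ℝ) := by exact_mod_cast h3
  have hxK : (L₁:ℝ) ≤ (K:ℝ) := hxy.trans hyK
  nlinarith [mul_pos hp hδ, mul_lt_mul_of_pos_left h4 hp,
    mul_nonneg (mul_nonneg hp.le hδ.le) (sub_nonneg.2 hyK),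
    mul_nonneg (mul_nonneg hp.le hδ.le) (sub_nonneg.2 hxK),
    mul_nonneg (mul_nonneg hp.le hδ.le) (sub_nonneg.2 (hx1.trans hxK))]
end
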